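/- There exists a constant C > 0 such that for every natural number n ≥ 2, the sum over all binary words x of length n of |d(x) − log₂ n| is at most C · 2^n, where d(x) is the length of the longest run of 0's in x and log₂ n is the real base-2 logarithm. (This concentration of the longest 0-run around log₂ n is the combinatorial content of the theorem that the average-case query complexity of string reconstruction is n + O(1): the seed-finding phase costs on average O(1) queries beyond a constant.) -/

import Mathlib

open Finset

/-- `longestZeroRun x` is the largest `ℓ` such that `0^ℓ` is a factor of `x`. -/
noncomputable def longestZeroRun (x : List Bool) : ℕ :=
  sSup {ℓ : ℕ | List.replicate ℓ false <:+: x}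

def HasRun (n k : ℕ) (x : Fin n → Bool) : Prop :=
  ∃ i : ℕ, ∃ _h : i + k ≤ n, ∀ t : ℕ, ∀ _h2 : t < k, x ⟨i + t, by omega⟩ = false

lemma hasRun_iff {n k : ℕ} (x : Fin n → Bool) :
    (List.replicate k false <:+: List.ofFn x) ↔ HasRun n k x := by
  constructor
  · rintro ⟨u, v, huv⟩
    have hlen : u.length + k + v.length = n := by
      have := congrArg List.length huv
      simp at this; omega
    refine ⟨u.length, by omega, ?_⟩
    intro t ht
    have h1 : u.length + t < ((u ++ List.replicate k false) ++ v).length := by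
      simp; omega
    have h2 : u.length + t < n := by omega
    have := congrArg (fun l => l[u.length + t]?) huv
    simp only [List.getElem?_eq_getElem h1, List.getElem?_ofFn] at this
    rw [List.getElem_append_left (by simp; omega),
      List.getElem_append_right (by simp) ] at this
    simp [List.getElem_replicate, List.ofFnNthVal, h2] at this
    simpa using this.symm
  · rintro ⟨i, h, hx⟩
    have hn : (List.ofFn x).length = n := by simp
    have h1 : ((List.ofFn x).drop i).take k = List.replicate k false := by
      rw [List.eq_replicate_iff]
      constructor
      · simp; omega
      · intro b hb
        rw [List.mem_iff_getElem] at hb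
        obtain ⟨j, hj, hb⟩ := hb
        have hjk : j < k := by simp at hj; omega
        rw [List.getElem_take, List.getElem_drop, List.getElem_ofFn] at hb
        rw [← hb]
        exact hx j hjk
    refine ⟨(List.ofFn x).take i, (List.ofFn x).drop (i + k), ?_⟩
    rw [← h1]
    rw [List.append_assoc, ← List.drop_drop, List.take_append_drop, List.take_append_drop]

lemma zero_mem_runSet {n : ℕ} (x : Fin n → Bool) :
    (0:ℕ) ∈ {ℓ : ℕ | List.replicate ℓ false <:+: List.ofFn x} := by
  simp [Set.mem_setOf_eq]

lemma runSet_bdd {n : ℕ} (x : Fin n → Bool) :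
    BddAbove {ℓ : ℕ | List.replicate ℓ false <:+: List.ofFn x} := by
  refine ⟨n, fun ℓ hl => ?_⟩
  have := hl.length_le
  simpa using this

lemma lzr_le {n : ℕ} (x : Fin n → Bool) : longestZeroRun (List.ofFn x) ≤ n := by
  apply csSup_le ⟨0, zero_mem_runSet x⟩
  intro ℓ hl
  have := hl.length_le
  simpa using this

lemma le_lzr_iff {n k : ℕ} (x : Fin n → Bool) :
    k ≤ longestZeroRun (List.ofFn x) ↔ HasRun n k x := by
  rw [← hasRun_iff]
  constructor
  · intro hk
    have hmem := Nat.sSup_mem ⟨0, zero_mem_runSet x⟩ (runSet_bdd x)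
    have hpre : List.replicate k false <+:
        List.replicate (longestZeroRun (List.ofFn x)) false := by
      refine ⟨List.replicate (longestZeroRun (List.ofFn x) - k) false, ?_⟩
      rw [← List.replicate_add]
      congr 1
      omega
    exact hpre.isInfix.trans hmem
  · intro hk
    exact le_csSup (runSet_bdd x) hk

lemma card_fix {N : ℕ} (S : Finset (Fin N)) (g : Fin N → Bool) :
    (univ.filter fun x : Fin N → Bool => ∀ i ∈ S, x i = g i).card = 2 ^ (N - S.card) := by
  rw [← Fintype.card_subtype]
  have e : {x : Fin N → Bool // ∀ i ∈ S, x i = g i} ≃ ({i : Fin N // i ∉ S} → Bool) :=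
    { toFun := fun x i => x.1 i.1
      invFun := fun y => ⟨fun i => if h : i ∈ S then g i else y ⟨i, h⟩,
        fun i hi => by simp [hi]⟩
      left_inv := fun x => by
        ext i
        by_cases h : i ∈ S
        · simp [h, (x.2 i h).symm]
        · simp [h]
      right_inv := fun y => by
        funext i
        simp [i.2] }
  rw [Fintype.card_congr e]
  rw [Fintype.card_fun, Fintype.card_bool, Fintype.card_subtype_compl,
    Fintype.card_fin, Fintype.card_coe]

lemma card_interval {n : ℕ} (i k : ℕ) (h : i + k ≤ n) :
    (univ.filter fun j : Fin n => i ≤ j.1 ∧ j.1 < i + k).card = k := by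
  have heq : (univ.filter fun j : Fin n => i ≤ j.1 ∧ j.1 < i + k)
      = Finset.image (fun t : Fin k => (⟨i + t.1, by omega⟩ : Fin n)) univ := by
    ext j
    simp only [mem_filter, mem_univ, true_and, Finset.mem_image]
    constructor
    · rintro ⟨h1, h2⟩
      exact ⟨⟨j.1 - i, by omega⟩, by apply Fin.ext; simp; omega⟩
    · rintro ⟨t, rfl⟩
      simp
  rw [heq, Finset.card_image_of_injective _ ?_, card_univ, Fintype.card_fin]
  intro t₁ t₂ ht
  have := congrArg Fin.val ht
  simp at this
  exact Fin.ext this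

noncomputable instance (n k : ℕ) : DecidablePred (HasRun n k) :=
  fun _ => Classical.propDecidable _

lemma card_hasRun_le {n k : ℕ} (hk : 1 ≤ k) (hkn : k ≤ n) :
    (univ.filter fun x : Fin n → Bool => HasRun n k x).card ≤ n * 2 ^ (n - k) := by
  classical
  have hsub : (univ.filter fun x : Fin n → Bool => HasRun n k x) ⊆
      (Finset.range (n - k + 1)).biUnion (fun i =>
        univ.filter fun x : Fin n → Bool =>
          ∀ j ∈ (univ.filter fun j : Fin n => i ≤ j.1 ∧ j.1 < i + k), x j = (false : Bool)) := by
    intro x hx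
    simp only [mem_filter, mem_univ, true_and] at hx
    obtain ⟨i, hi, hx⟩ := hx
    refine mem_biUnion.2 ⟨i, by rw [Finset.mem_range]; omega, ?_⟩
    simp only [mem_filter, mem_univ, true_and]
    intro j hj
    obtain ⟨h1, h2⟩ := hj
    have hje : j = ⟨i + (j.1 - i), by omega⟩ := by apply Fin.ext; simp; omega
    rw [hje]
    exact hx _ (by omega)
  calc (univ.filter fun x : Fin n → Bool => HasRun n k x).card
      ≤ ((Finset.range (n - k + 1)).biUnion _).card := Finset.card_le_card hsub
    _ ≤ ∑ i ∈ Finset.range (n - k + 1), (univ.filter fun x : Fin n → Bool =>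
          ∀ j ∈ (univ.filter fun j : Fin n => i ≤ j.1 ∧ j.1 < i + k), x j = (false : Bool)).card :=
        Finset.card_biUnion_le
    _ ≤ ∑ i ∈ Finset.range (n - k + 1), 2 ^ (n - k) := by
        refine Finset.sum_le_sum fun i hi => ?_
        rw [Finset.mem_range] at hi
        rw [card_fix _ (fun _ => false), card_interval i k (by omega)]
    _ = (n - k + 1) * 2 ^ (n - k) := by rw [Finset.sum_const, Finset.card_range, smul_eq_mul]
    _ ≤ n * 2 ^ (n - k) := by
        apply Nat.mul_le_mul_right
        omega

lemma card_block_ge {k : ℕ} (hk : 1 ≤ k) :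
    (k + 2) * 2 ^ (k - 1) ≤ (univ.filter fun y : Fin (2*k) → Bool => HasRun (2*k) k y).card := by
  classical
  set E : ℕ → Finset (Fin (2*k) → Bool) := fun i =>
    univ.filter fun y => ∀ j ∈ (univ.filter fun j : Fin (2*k) => i - 1 ≤ j.1 ∧ j.1 < i + k),
      y j = decide (j.1 + 1 = i) with hE
  have hEcard : ∀ i, i ≤ k → (E i).card = if i = 0 then 2^k else 2^(k-1) := by
    intro i hi
    have hSeq : (univ.filter fun j : Fin (2*k) => i - 1 ≤ j.1 ∧ j.1 < i + k)
        = (univ.filter fun j : Fin (2*k) => (i-1) ≤ j.1 ∧ j.1 < (i-1) + (i + k - (i-1))) := by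
      ext j; simp only [mem_filter, mem_univ, true_and]; omega
    rw [hE]
    simp only
    rw [card_fix, hSeq, card_interval (i-1) (i + k - (i-1)) (by omega)]
    rcases Nat.eq_zero_or_pos i with h0 | h0
    · subst h0; simp; omega
    · rw [if_neg (by omega)]; congr 1; omega
  have hsub : ∀ i, i ≤ k → E i ⊆ (univ.filter fun y : Fin (2*k) → Bool => HasRun (2*k) k y) := by
    intro i hi y hy
    simp only [hE, mem_filter, mem_univ, true_and] at hy ⊢
    refine ⟨i, by omega, ?_⟩
    intro t ht
    have := hy ⟨i + t, by omega⟩ (by simp; omega)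
    simpa [show ¬ (i + t + 1 = i) by omega] using this
  have hdisj : ∀ i i', i < i' → i' ≤ k → ∀ y, y ∈ E i → y ∉ E i' := by
    intro i i' hii hi' y hyi hyi'
    simp only [hE, mem_filter, mem_univ, true_and] at hyi hyi'
    have h1 := hyi' ⟨i' - 1, by omega⟩ (by simp; omega)
    have h2 := hyi ⟨i' - 1, by omega⟩ (by simp; omega)
    rw [h1] at h2
    simp [show i' - 1 + 1 = i' by omega, show ¬ (i' - 1 + 1 = i) by omega] at h2
    omega
  have hbu : (Finset.range (k+1)).biUnion E ⊆
      (univ.filter fun y : Fin (2*k) → Bool => HasRun (2*k) k y) := by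
    intro y hy
    rw [Finset.mem_biUnion] at hy
    obtain ⟨i, hi, hy⟩ := hy
    exact hsub i (by simpa using Nat.lt_succ_iff.1 (Finset.mem_range.1 hi)) hy
  have hdis : ∀ i ∈ Finset.range (k+1), ∀ j ∈ Finset.range (k+1), i ≠ j →
      Disjoint (E i) (E j) := by
    intro i hi j hj hij
    rw [Finset.disjoint_left]
    intro y hyi hyj
    rw [Finset.mem_range] at hi hj
    rcases Nat.lt_or_ge i j with h | h
    · exact hdisj i j h (by omega) y hyi hyj
    · exact hdisj j i (by omega) (by omega) y hyj hyi
  calc (k + 2) * 2 ^ (k - 1) = ∑ i ∈ Finset.range (k+1), (E i).card := by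
        rw [Finset.sum_range_succ']
        have : ∀ i ∈ Finset.range k, (E (i+1)).card = 2^(k-1) := by
          intro i hi
          rw [Finset.mem_range] at hi
          rw [hEcard (i+1) (by omega), if_neg (by omega)]
        rw [Finset.sum_congr rfl this, hEcard 0 (by omega), if_pos rfl,
          Finset.sum_const, Finset.card_range, smul_eq_mul]
        have h2 : 2^k = 2 * 2^(k-1) := by
          rw [← pow_succ']
          congr 1
          omega
        rw [h2]; ring
    _ = ((Finset.range (k+1)).biUnion E).card := (Finset.card_biUnion hdis).symm
    _ ≤ _ := Finset.card_le_card hbu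

lemma card_noRun_le {n k m : ℕ} (hk : 1 ≤ k) (hm : 2*k*m ≤ n) :
    (univ.filter fun x : Fin n → Bool => ¬ HasRun n k x).card ≤
      ((univ.filter fun y : Fin (2*k) → Bool => ¬ HasRun (2*k) k y).card) ^ m
        * 2 ^ (n - 2*k*m) := by
  classical
  have key : Fintype.card {x : Fin n → Bool // ¬ HasRun n k x} ≤
      Fintype.card ((Fin m → {y : Fin (2*k) → Bool // ¬ HasRun (2*k) k y})
        × (Fin (n - 2*k*m) → Bool)) := by
    have hblock : ∀ (i : Fin m), 2*k*i.1 + 2*k ≤ 2*k*m := by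
      intro i
      have := Nat.mul_le_mul_left (2*k) (Nat.succ_le_of_lt i.2)
      rw [Nat.mul_succ] at this
      exact this
    apply Fintype.card_le_of_injective
      (fun x => (fun i => ⟨fun t => x.1 ⟨2*k*i.1 + t.1, by have := hblock i; omega⟩, by
        rintro ⟨i0, h0, hx0⟩
        exact x.2 ⟨2*k*i.1 + i0, ⟨by have := hblock i; omega, fun t ht => by
          have h := hx0 t ht
          simp only at h
          rw [← h]
          exact congrArg _ (Fin.ext (Nat.add_assoc _ _ _))⟩⟩⟩,
       fun t => x.1 ⟨2*k*m + t.1, by omega⟩))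
    rintro ⟨x, hx⟩ ⟨x', hx'⟩ hF
    have h1 := congrArg Prod.fst hF
    have h2 := congrArg Prod.snd hF
    simp only at h1 h2
    apply Subtype.ext
    funext j
    rcases Nat.lt_or_ge j.1 (2*k*m) with hj | hj
    · have hq : j.1 / (2*k) < m := Nat.div_lt_of_lt_mul (by omega)
      have hr : j.1 % (2*k) < 2*k := Nat.mod_lt _ (by omega)
      have hdm := Nat.div_add_mod j.1 (2*k)
      have h3 := congrFun (congrArg Subtype.val (congrFun h1 ⟨j.1 / (2*k), hq⟩))
        ⟨j.1 % (2*k), hr⟩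
      simp only at h3
      have hje : j = ⟨2*k*(j.1/(2*k)) + j.1 % (2*k), by omega⟩ := by
        apply Fin.ext; simp; omega
      rw [hje]
      exact h3
    · have h3 := congrFun h2 ⟨j.1 - 2*k*m, by omega⟩
      simp only at h3
      have hje : j = ⟨2*k*m + (j.1 - 2*k*m), by omega⟩ := by
        apply Fin.ext; simp; omega
      rw [hje]
      exact h3
  simp only [Fintype.card_prod, Fintype.card_fun, Fintype.card_subtype, Fintype.card_bool,
    Fintype.card_fin] at key
  exact key

lemma two_mul_le_two_pow {a : ℕ} (h : 1 ≤ a) : 2*a ≤ 2^a := by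
  induction a with
  | zero => omega
  | succ b ih =>
    rcases Nat.eq_zero_or_pos b with rfl | hb
    · norm_num
    · have h1 := ih hb
      have h2 : 2 ≤ 2^b := Nat.one_lt_two_pow_iff.2 (by omega)
      rw [pow_succ]
      omega

lemma card_noRun_real {n K : ℕ} (hK : 1 ≤ K) (h2K : 2*K ≤ n) :
    ((univ.filter fun x : Fin n → Bool => ¬ HasRun n K x).card : ℝ)
      ≤ 2^n * 2^(K+3) / n := by
  classical
  set m := n / (2*K) with hmdef
  have hKpos : 0 < 2*K := by omega
  have hm1 : 1 ≤ m := (Nat.one_le_div_iff hKpos).2 h2K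
  have hmn : 2*K*m ≤ n := Nat.mul_div_le n (2*K)
  have hdm : 2*K*m + n % (2*K) = n := Nat.div_add_mod n (2*K)
  have hmod : n % (2*K) < 2*K := Nat.mod_lt _ hKpos
  have hmge : 2*K ≤ 2*K*m := Nat.le_mul_of_pos_right _ hm1
  have hn4 : (n:ℕ) ≤ 2*(2*K*m) := by
    generalize 2*K*m = M at *
    omega
  -- the block bad count
  set B := (univ.filter fun y : Fin (2*K) → Bool => ¬ HasRun (2*K) K y).card with hBdef
  have hBg : B + (univ.filter fun y : Fin (2*K) → Bool => HasRun (2*K) K y).card = 2^(2*K) := by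
    rw [hBdef, add_comm]
    rw [Finset.card_filter_add_card_filter_not]
    simp [Fintype.card_fun]
  have hBle : B ≤ 2^(2*K) - (K+2) * 2^(K-1) := by
    have := card_block_ge hK
    omega
  have hN := card_noRun_le hK hmn
  -- move to ℝ
  set t : ℝ := (K+2)/2^(K+1) with htdef
  have ht0 : 0 ≤ t := by positivity
  have hKp : (K:ℝ) + 2 ≤ 2^(K+1) := by
    have h1 : 2*(K+1) ≤ 2^(K+1) := two_mul_le_two_pow (by omega)
    have : (K:ℕ) + 2 ≤ 2^(K+1) := by omega
    exact_mod_cast this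
  have ht1 : t ≤ 1 := by
    rw [htdef, div_le_one (by positivity)]
    exact hKp
  have hq0 : (0:ℝ) ≤ 1 - t := by linarith
  have hBR : (B:ℝ) ≤ 2^(2*K) * (1 - t) := by
    have h1 : ((K:ℝ)+2) * 2^(K-1) = 2^(2*K) * t := by
      rw [htdef, mul_div_assoc', eq_div_iff (by positivity), mul_assoc, ← pow_add,
        show K - 1 + (K+1) = 2*K by omega]
      ring
    have hle2 : (K+2) * 2^(K-1) ≤ 2^(2*K) := by
      have := card_block_ge (k := K) hK
      omega
    have hcast : (B:ℝ) ≤ (2^(2*K) : ℕ) - ((K+2) * 2^(K-1) : ℕ) := by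
      rw [← Nat.cast_sub hle2]
      exact_mod_cast hBle
    push_cast at hcast
    rw [mul_sub, mul_one, ← h1]
    linarith
  have hnpos : (0:ℝ) < n := by
    have : 0 < n := by omega
    exact_mod_cast this
  have hNR : ((univ.filter fun x : Fin n → Bool => ¬ HasRun n K x).card : ℝ)
      ≤ 2^n * (1-t)^m := by
    calc ((univ.filter fun x : Fin n → Bool => ¬ HasRun n K x).card : ℝ)
        ≤ (B:ℝ)^m * 2^(n - 2*K*m) := by exact_mod_cast hN
      _ ≤ (2^(2*K)*(1-t))^m * 2^(n-2*K*m) := by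
          apply mul_le_mul_of_nonneg_right _ (by positivity)
          exact pow_le_pow_left₀ (by positivity) hBR m
      _ = 2^n * (1-t)^m := by
          rw [mul_pow, ← pow_mul,
            show (2:ℝ)^(2*K*m) * (1-t)^m * 2^(n-2*K*m)
              = (2^(2*K*m) * 2^(n-2*K*m)) * (1-t)^m by ring,
            ← pow_add, show 2*K*m + (n - 2*K*m) = n from by omega]
  have hcast4 : (n:ℝ) ≤ 2*(2*K*m) := by exact_mod_cast hn4
  have hmt : (n:ℝ)/2^(K+3) ≤ (m:ℝ)*t := by
    rw [htdef, mul_div_assoc', div_le_div_iff₀ (by positivity) (by positivity)]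
    have hm0 : (0:ℝ) ≤ (m:ℝ) := by positivity
    have e1 : (2:ℝ)^(K+1) = 2*2^K := by rw [pow_succ]; ring
    have e2 : (2:ℝ)^(K+3) = 8*2^K := by
      rw [show K+3 = K+1+1+1 by omega, pow_succ, pow_succ, pow_succ]; ring
    rw [e1, e2]
    nlinarith [mul_le_mul_of_nonneg_right hcast4 (pow_nonneg (by norm_num : (0:ℝ) ≤ 2) K),
      mul_nonneg hm0 (pow_nonneg (by norm_num : (0:ℝ) ≤ 2) K)]
  have hqm : (1-t)^m * ((m:ℝ)*t) ≤ 1 := by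
    have h1 : 1 + (m:ℝ)*t ≤ (1+t)^m := one_add_mul_le_pow (by linarith) m
    have h2 : (1-t)^m * (1+t)^m ≤ 1 := by
      rw [← mul_pow]
      apply pow_le_one₀ (by nlinarith) (by nlinarith)
    calc (1-t)^m * ((m:ℝ)*t) ≤ (1-t)^m * (1+(m:ℝ)*t) := by
          apply mul_le_mul_of_nonneg_left (by linarith) (pow_nonneg hq0 m)
      _ ≤ (1-t)^m * (1+t)^m := mul_le_mul_of_nonneg_left h1 (pow_nonneg hq0 m)
      _ ≤ 1 := h2
  have hqmle : (1-t)^m ≤ 2^(K+3)/n := by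
    rw [le_div_iff₀ hnpos]
    have h3 : (1-t)^m * ((n:ℝ)/2^(K+3)) ≤ 1 :=
      le_trans (mul_le_mul_of_nonneg_left hmt (pow_nonneg hq0 m)) hqm
    have hp : (0:ℝ) < (2:ℝ)^(K+3) := by positivity
    have h4 := mul_le_mul_of_nonneg_right h3 (le_of_lt hp)
    rw [mul_assoc, div_mul_cancel₀ _ (ne_of_gt hp), one_mul] at h4
    exact h4
  calc ((univ.filter fun x : Fin n → Bool => ¬ HasRun n K x).card : ℝ)
      ≤ 2^n * (1-t)^m := hNR
    _ ≤ 2^n * (2^(K+3)/n) := mul_le_mul_of_nonneg_left hqmle (by positivity)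
    _ = 2^n * 2^(K+3)/n := by rw [mul_div_assoc]

lemma cast_sub_ge (p q : ℕ) : (p:ℝ) - q ≤ ((p - q : ℕ):ℝ) := by
  rcases le_total q p with h | h
  · rw [Nat.cast_sub h]
  · have h0 : p - q = 0 := by omega
    rw [h0, Nat.cast_zero, sub_nonpos]
    exact_mod_cast h

/-- The longest `0`-run concentrates around `log₂ n`: for some constant
`C > 0`, the sum of `|d(x) - log₂ n|` over all binary words `x` of length `n`
is at most `C * 2 ^ n`, for every `n ≥ 2`. -/
theorem sum_abs_dev_longest_zero_run_le :
    ∃ C : ℝ, 0 < C ∧ ∀ n : ℕ, 2 ≤ n →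
      ∑ x : Fin n → Bool, |(longestZeroRun (List.ofFn x) : ℝ) - Real.logb 2 n|
        ≤ C * 2 ^ n := by
  classical
  refine ⟨100, by norm_num, ?_⟩
  intro n hn
  set d : (Fin n → Bool) → ℕ := fun x => longestZeroRun (List.ofFn x) with hddef
  set a := Nat.log 2 n with hadef
  have ha1 : 1 ≤ a := Nat.log_pos (by norm_num) hn
  have hpa : 2^a ≤ n := Nat.pow_log_le_self 2 (by omega)
  have hpa2 : n < 2^(a+1) := Nat.lt_pow_succ_log_self (by norm_num) n
  have hnR : (0:ℝ) < n := by exact_mod_cast (by omega : 0 < n)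
  have hL1 : (a:ℝ) ≤ Real.logb 2 n := by
    have h1 : Real.logb 2 ((2:ℝ)^a) ≤ Real.logb 2 n := by
      apply Real.logb_le_logb_of_le (by norm_num) (by positivity)
      exact_mod_cast hpa
    rwa [Real.logb_pow, Real.logb_self_eq_one (by norm_num), mul_one] at h1
  have hL2 : Real.logb 2 n ≤ (a:ℝ) + 1 := by
    have h1 : Real.logb 2 n ≤ Real.logb 2 ((2:ℝ)^(a+1)) := by
      apply Real.logb_le_logb_of_le (by norm_num) hnR
      exact_mod_cast le_of_lt hpa2
    rwa [Real.logb_pow, Real.logb_self_eq_one (by norm_num), mul_one,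
      Nat.cast_add, Nat.cast_one] at h1
  -- pointwise bound
  have hpt : ∀ x : Fin n → Bool, |(d x : ℝ) - Real.logb 2 n|
      ≤ ((d x - a : ℕ):ℝ) + ((a - d x : ℕ):ℝ) + 1 := by
    intro x
    have h1 := cast_sub_ge (d x) a
    have h2 := cast_sub_ge a (d x)
    have h3 : (0:ℝ) ≤ ((d x - a : ℕ):ℝ) := by positivity
    have h4 : (0:ℝ) ≤ ((a - d x : ℕ):ℝ) := by positivity
    rw [abs_le]
    constructor <;> linarith
  have hcardU : (Finset.univ : Finset (Fin n → Bool)).card = 2^n := by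
    rw [card_univ, Fintype.card_fun, Fintype.card_bool, Fintype.card_fin]
  -- sum split
  have hsplit : ∑ x : Fin n → Bool, |(d x : ℝ) - Real.logb 2 n|
      ≤ ((∑ x : Fin n → Bool, (d x - a) : ℕ):ℝ)
        + ((∑ x : Fin n → Bool, (a - d x) : ℕ):ℝ) + 2^n := by
    calc ∑ x : Fin n → Bool, |(d x : ℝ) - Real.logb 2 n|
        ≤ ∑ x : Fin n → Bool, (((d x - a : ℕ):ℝ) + ((a - d x : ℕ):ℝ) + 1) :=
          Finset.sum_le_sum fun x _ => hpt x
      _ = ((∑ x : Fin n → Bool, (d x - a) : ℕ):ℝ)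
          + ((∑ x : Fin n → Bool, (a - d x) : ℕ):ℝ) + 2^n := by
          rw [Finset.sum_add_distrib, Finset.sum_add_distrib, Finset.sum_const, hcardU]
          push_cast
          simp
  -- upper tail
  have hA : ((∑ x : Fin n → Bool, (d x - a) : ℕ):ℝ) ≤ 2 * 2^n := by
    have hswap : (∑ x : Fin n → Bool, (d x - a))
        = ∑ j ∈ Finset.range n, (univ.filter fun x : Fin n → Bool => a + j + 1 ≤ d x).card := by
      have hx : ∀ x : Fin n → Bool, d x - a
          = ∑ j ∈ Finset.range n, if a + j + 1 ≤ d x then 1 else 0 := by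
        intro x
        rw [← Finset.card_filter]
        have hdn : d x ≤ n := lzr_le x
        have : (Finset.range n).filter (fun j => a + j + 1 ≤ d x) = Finset.range (d x - a) := by
          ext j
          simp only [Finset.mem_filter, Finset.mem_range]
          omega
        rw [this, Finset.card_range]
      rw [Finset.sum_congr rfl (fun x _ => hx x), Finset.sum_comm]
      exact Finset.sum_congr rfl fun j _ => (Finset.card_filter _ _).symm
    rw [hswap]
    push_cast
    have hterm : ∀ j ∈ Finset.range n,
        ((univ.filter fun x : Fin n → Bool => a + j + 1 ≤ d x).card : ℝ)
          ≤ 2^n * (1/2)^j := by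
      intro j hj
      by_cases hjn : a + j + 1 ≤ n
      · have heq : (univ.filter fun x : Fin n → Bool => a + j + 1 ≤ d x)
            = (univ.filter fun x : Fin n → Bool => HasRun n (a+j+1) x) := by
          ext x
          simp only [mem_filter, mem_univ, true_and]
          exact le_lzr_iff x
        rw [heq]
        have h1 := card_hasRun_le (n := n) (k := a+j+1) (by omega) hjn
        have h2 : ((univ.filter fun x : Fin n → Bool => HasRun n (a+j+1) x).card : ℝ)
            ≤ (n:ℝ) * 2^(n - (a+j+1)) := by exact_mod_cast h1
        have h3 : (n:ℝ) ≤ 2^(a+1) := by exact_mod_cast le_of_lt hpa2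
        have h4 : (n:ℝ) * 2^(n - (a+j+1)) ≤ 2^(a+1) * 2^(n-(a+j+1)) := by
          apply mul_le_mul_of_nonneg_right h3 (by positivity)
        have h5 : (2:ℝ)^(a+1) * 2^(n-(a+j+1)) * 2^j ≤ 2^n := by
          rw [← pow_add, ← pow_add]
          apply pow_le_pow_right₀ (by norm_num)
          omega
        have h6 : (2:ℝ)^n * (1/2)^j = 2^n / 2^j := by
          rw [div_pow, one_pow, mul_one_div]
        rw [h6, le_div_iff₀ (by positivity)]
        calc ((univ.filter fun x : Fin n → Bool => HasRun n (a+j+1) x).card : ℝ) * 2^j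
            ≤ ((n:ℝ) * 2^(n - (a+j+1))) * 2^j := by
              apply mul_le_mul_of_nonneg_right h2 (by positivity)
          _ ≤ (2^(a+1) * 2^(n-(a+j+1))) * 2^j := by
              apply mul_le_mul_of_nonneg_right h4 (by positivity)
          _ ≤ 2^n := h5
      · have heq : (univ.filter fun x : Fin n → Bool => a + j + 1 ≤ d x) = ∅ := by
          rw [Finset.eq_empty_iff_forall_notMem]
          intro x hx
          simp only [mem_filter, mem_univ, true_and] at hx
          have h7 : d x ≤ n := lzr_le x
          omega
        rw [heq]
        simp
    calc ∑ j ∈ Finset.range n,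
          ((univ.filter fun x : Fin n → Bool => a + j + 1 ≤ d x).card : ℝ)
        ≤ ∑ j ∈ Finset.range n, (2:ℝ)^n * (1/2)^j := Finset.sum_le_sum hterm
      _ = 2^n * ∑ j ∈ Finset.range n, (1/2:ℝ)^j := by rw [Finset.mul_sum]
      _ ≤ 2^n * 2 := by
          apply mul_le_mul_of_nonneg_left (sum_geometric_two_le n) (by positivity)
      _ = 2 * 2^n := by ring
  -- lower tail
  have hB : ((∑ x : Fin n → Bool, (a - d x) : ℕ):ℝ) ≤ 16 * 2^n := by
    have hswap : (∑ x : Fin n → Bool, (a - d x))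
        = ∑ j ∈ Finset.range a, (univ.filter fun x : Fin n → Bool => d x ≤ j).card := by
      have hx : ∀ x : Fin n → Bool, a - d x
          = ∑ j ∈ Finset.range a, if d x ≤ j then 1 else 0 := by
        intro x
        rw [← Finset.card_filter]
        have : (Finset.range a).filter (fun j => d x ≤ j) = Finset.Ico (d x) a := by
          ext j
          simp only [Finset.mem_filter, Finset.mem_range, Finset.mem_Ico]
          omega
        rw [this, Nat.card_Ico]
      rw [Finset.sum_congr rfl (fun x _ => hx x), Finset.sum_comm]
      exact Finset.sum_congr rfl fun j _ => (Finset.card_filter _ _).symm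
    rw [hswap]
    push_cast
    have h2a : 2*a ≤ n := le_trans (two_mul_le_two_pow ha1) hpa
    have hterm : ∀ j ∈ Finset.range a,
        ((univ.filter fun x : Fin n → Bool => d x ≤ j).card : ℝ)
          ≤ (2^n / n) * 2^(j+4) := by
      intro j hj
      rw [Finset.mem_range] at hj
      have heq : (univ.filter fun x : Fin n → Bool => d x ≤ j)
          = (univ.filter fun x : Fin n → Bool => ¬ HasRun n (j+1) x) := by
        ext x
        simp only [mem_filter, mem_univ, true_and]
        rw [← le_lzr_iff]
        have h7 : d x = longestZeroRun (List.ofFn x) := rfl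
        omega
      rw [heq]
      have h2K : 2*(j+1) ≤ n := by omega
      have := card_noRun_real (n := n) (K := j+1) (by omega) h2K
      calc ((univ.filter fun x : Fin n → Bool => ¬ HasRun n (j+1) x).card : ℝ)
          ≤ 2^n * 2^(j+1+3) / n := this
        _ = (2^n / n) * 2^(j+4) := by
            rw [show j+1+3 = j+4 by omega]
            ring
    calc ∑ j ∈ Finset.range a,
          ((univ.filter fun x : Fin n → Bool => d x ≤ j).card : ℝ)
        ≤ ∑ j ∈ Finset.range a, (2^n / (n:ℝ)) * 2^(j+4) := Finset.sum_le_sum hterm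
      _ = (2^n / n) * ∑ j ∈ Finset.range a, (2:ℝ)^(j+4) := by rw [Finset.mul_sum]
      _ = (2^n / n) * (16 * ((2:ℝ)^a - 1)) := by
          congr 1
          have hgeom : ∑ j ∈ Finset.range a, (2:ℝ)^j = 2^a - 1 := by
            rw [geom_sum_eq (by norm_num : (2:ℝ) ≠ 1) a]
            norm_num
          calc ∑ j ∈ Finset.range a, (2:ℝ)^(j+4)
              = ∑ j ∈ Finset.range a, (2:ℝ)^j * 16 := by
                apply Finset.sum_congr rfl
                intro j _
                rw [pow_add]
                norm_num
            _ = 16 * ((2:ℝ)^a - 1) := by rw [← Finset.sum_mul, hgeom]; ring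
      _ ≤ (2^n / n) * (16 * n) := by
          apply mul_le_mul_of_nonneg_left _ (by positivity)
          have : (2:ℝ)^a ≤ n := by exact_mod_cast hpa
          linarith
      _ = 16 * 2^n := by field_simp
  have hfin : ((∑ x : Fin n → Bool, (d x - a) : ℕ):ℝ)
      + ((∑ x : Fin n → Bool, (a - d x) : ℕ):ℝ) + 2^n ≤ 100 * 2^n := by
    have hp : (0:ℝ) < 2^n := by positivity
    linarith
  exact le_trans hsplit hfin
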